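/- The standardization of a weak set-valued shifted tableau is a standard set-valued shifted tableau. -/

import Mathlib

/-- A shifted tableau: list of rows; row `i` is indented `i` units. -/
abbrev Tableau := List (List ℕ)

/-- Row `i` of a tableau. -/
def trow (T : Tableau) (i : ℕ) : List ℕ := T.getD i []

/-- Entry of `T` in row `i` and *absolute* column `j` (both 0-indexed). -/
def tentry? (T : Tableau) (i j : ℕ) : Option ℕ :=
  if i ≤ j then (trow T i)[j - i]? else none

/-- The (shifted) shape of a tableau: the list of row lengths. -/
def tshape (T : Tableau) : List ℕ := T.map List.length

/-- A strict partition: strictly decreasing list of positive integers. -/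
def IsStrictPartition (l : List ℕ) : Prop :=
  List.Chain' (fun a b => b < a) l ∧ ∀ x ∈ l, 0 < x

/-- Increasing shifted tableau: shape is a shifted shape of a strict partition
(row lengths strictly decrease), entries are positive and strictly increase
along rows and down columns. -/
def IsIncreasing (T : Tableau) : Prop :=
  (∀ r ∈ T, r ≠ []) ∧
  List.Chain' (fun r s => s.length < r.length) T ∧
  (∀ r ∈ T, List.Chain' (· < ·) r) ∧
  (∀ i j a b, tentry? T i j = some a → tentry? T (i + 1) j = some b → a < b) ∧
  (∀ r ∈ T, ∀ x ∈ r, 0 < x)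


/-- Result of inserting one letter: the new tableau, the box (row, absolute
column) where the insertion terminated, and whether the insertion ended with
column insertion or a failed row insertion into an empty row (primed). -/
structure InsRes where
  tab : Tableau
  box : ℕ × ℕ
  primed : Bool
deriving Repr, DecidableEq

def setEntry (T : Tableau) (i k x : ℕ) : Tableau := T.set i ((trow T i).set k x)

def appendEntry (T : Tableau) (i x : ℕ) : Tableau :=
  if i < T.length then T.set i (trow T i ++ [x]) else T ++ [[x]]

/-- The rows having a box in absolute column `c`. -/
def colRows (T : Tableau) (c : ℕ) : List ℕ :=
  (List.range T.length).filter (fun i => (tentry? T i c).isSome)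

inductive HMode where
  | row (r : ℕ)
  | col (c : ℕ)

/-- One step of shifted Hecke insertion (Patrias–Pylyavskyy): insert `x`
into row `r` (resp. column `c`), either terminating or producing an output
letter to be inserted into the next row (resp. column). -/
def insertStep (T : Tableau) : HMode → ℕ → InsRes ⊕ (Tableau × HMode × ℕ)
  | .row r, x =>
    let R := trow T r
    match R.findIdx? (fun a => decide (x < a)) with
    | none =>
      let kk := R.length
      let aboveOK : Bool := (r == 0) ||
        ((tentry? T (r - 1) (r + kk)).elim false (fun a => decide (a < x)))
      if ((R.isEmpty : Bool) || decide (R.getLastD 0 < x)) && aboveOK then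
        .inl ⟨appendEntry T r x, (r, r + kk), false⟩
      else if R.isEmpty then
        .inl ⟨T, (r - 1, (r - 1) + (trow T (r - 1)).length - 1), true⟩
      else
        .inl ⟨T, ((colRows T (r + kk - 1)).getLastD 0, r + kk - 1), false⟩
    | some k =>
      let y := R.getD k 0
      let ok : Bool := ((k == 0) || decide (R.getD (k - 1) 0 < x)) &&
        ((r == 0) || (tentry? T (r - 1) (r + k)).elim true (fun a => decide (a < x)))
      let T' := if ok then setEntry T r k x else T
      if k == 0 then .inr (T', .col (r + 1), y) else .inr (T', .row (r + 1), y)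
  | .col c, x =>
    let rows := colRows T c
    match rows.find? (fun i => decide (x < (tentry? T i c).getD 0)) with
    | none =>
      let istar := (rows.getLast?).elim 0 (· + 1)
      let k := c - istar
      let R := trow T istar
      let ok : Bool := decide (istar ≤ c) && (R.length == k) &&
        ((k == 0) || decide (R.getD (k - 1) 0 < x)) &&
        ((istar == 0) || (tentry? T (istar - 1) c).elim false (fun a => decide (a < x)))
      if ok then
        .inl ⟨appendEntry T istar x, (istar, c), true⟩
      else
        let ib := rows.getLastD 0
        .inl ⟨T, (ib, ib + (trow T ib).length - 1), true⟩
    | some i =>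
      let k := c - i
      let y := (trow T i).getD k 0
      let ok : Bool := ((k == 0) || decide ((trow T i).getD (k - 1) 0 < x)) &&
        ((i == 0) || (tentry? T (i - 1) c).elim true (fun a => decide (a < x)))
      let T' := if ok then setEntry T i k x else T
      .inr (T', .col (c + 1), y)

def insertAux : ℕ → Tableau → HMode → ℕ → InsRes
  | 0, T, _, _ => ⟨T, (0, 0), false⟩
  | fuel + 1, T, m, x =>
    match insertStep T m x with
    | .inl res => res
    | .inr (T', m', x') => insertAux fuel T' m' x'

/-- Shifted Hecke insertion of a single letter `x` into `T`. -/
def insert1 (T : Tableau) (x : ℕ) : InsRes :=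
  insertAux (T.length + (trow T 0).length + x + 10) T (.row 0) x

/-- Set-valued shifted tableaux (and weak set-valued shifted tableaux) are
fillings of a shifted shape by multisets of entries `(v, p)`, where `p = true`
means the entry is the primed letter `v'`. -/
abbrev SVTRep := List (List (Multiset (ℕ × Bool)))

def tabRecStep (TQ : Tableau × SVTRep) (ix : ℕ × ℕ) : Tableau × SVTRep :=
  let res := insert1 TQ.1 ix.2
  let l : ℕ × Bool := (ix.1 + 1, res.primed)
  let r := res.box.1
  let k := res.box.2 - res.box.1
  let Q := TQ.2
  let Q' :=
    if tshape res.tab ≠ tshape TQ.1 then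
      if r < Q.length then Q.set r ((Q.getD r []) ++ [{l}]) else Q ++ [[{l}]]
    else
      Q.set r ((Q.getD r []).set k (l ::ₘ (Q.getD r []).getD k 0))
  (res.tab, Q')

def tabRec (w : List ℕ) : Tableau × SVTRep := (w.zipIdx.map Prod.swap).foldl tabRecStep ([], [])

/-- The shifted Hecke insertion tableau of a word. -/
def Tab (w : List ℕ) : Tableau := (tabRec w).1

/-- The shifted Hecke insertion recording tableau of a word. -/
def Rec (w : List ℕ) : SVTRep := (tabRec w).2

/-- Key giving the total order `1' < 1 < 2' < 2 < ⋯` ((v, true) means `v'`). -/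
def keyOf (e : ℕ × Bool) : ℕ := 2 * e.1 - (if e.2 then 1 else 0)

def boxAt (T : SVTRep) (i k : ℕ) : Multiset (ℕ × Bool) := (T.getD i []).getD k 0

def sshape (T : SVTRep) : List ℕ := T.map List.length

/-- The multiset of all entries of a (weak) set-valued shifted tableau. -/
def totalMS (T : SVTRep) : Multiset (ℕ × Bool) := (T.map (fun r => r.sum)).sum

/-- Weak set-valued shifted tableau: boxes of a shifted shape filled with
finite nonempty multisets of primed/unprimed positive integers, rows and
columns weakly increasing between boxes, no primed entries on the main
diagonal, each unprimed letter in at most one box per column, each primed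
letter in at most one box per row. -/
def IsWSVT (T : SVTRep) : Prop :=
  (∀ r ∈ T, r ≠ []) ∧
  List.Chain' (fun r s => s.length < r.length) T ∧
  (∀ r ∈ T, ∀ b ∈ r, b ≠ 0) ∧
  (∀ e ∈ totalMS T, 0 < e.1) ∧
  (∀ i k, ∀ x ∈ boxAt T i k, ∀ y ∈ boxAt T i (k + 1), keyOf x ≤ keyOf y) ∧
  (∀ i k, ∀ x ∈ boxAt T i (k + 1), ∀ y ∈ boxAt T (i + 1) k, keyOf x ≤ keyOf y) ∧
  (∀ i, ∀ e ∈ boxAt T i 0, e.2 = false) ∧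
  (∀ v c : ℕ, {i | i ≤ c ∧ (v, false) ∈ boxAt T i (c - i)}.Subsingleton) ∧
  (∀ v i : ℕ, {k | (v, true) ∈ boxAt T i k}.Subsingleton)

/-- Set-valued shifted tableau: boxes contain (nonempty) *sets*. -/
def IsSVT (T : SVTRep) : Prop := IsWSVT T ∧ ∀ r ∈ T, ∀ b ∈ r, b.Nodup

/-- Standard set-valued shifted tableau on `n` letters: each of `1, …, n`
appears exactly once, either primed or unprimed. -/
def IsStdSVT (n : ℕ) (T : SVTRep) : Prop :=
  IsSVT T ∧ Multiset.map Prod.fst (totalMS T) = (Finset.Icc 1 n).val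

/-- Position (row, index-in-row) of the box containing a given entry. -/
def posOf (Q : SVTRep) (e : ℕ × Bool) : Option (ℕ × ℕ) :=
  (List.range Q.length).findSome? (fun i =>
    ((Q.getD i []).findIdx? (fun b => decide (e ∈ b))).map (fun k => (i, k)))

/-- Descent set of a standard set-valued shifted tableau. -/
def Ddesc (Q : SVTRep) : Set ℕ :=
  {i | 1 ≤ i ∧ (
    ((posOf Q (i, false)).isSome ∧ (posOf Q (i + 1, true)).isSome) ∨
    (∃ p q, posOf Q (i, false) = some p ∧ posOf Q (i + 1, false) = some q ∧ p.1 < q.1) ∨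
    (∃ p q, posOf Q (i, true) = some p ∧ posOf Q (i + 1, true) = some q ∧
      q.1 ≤ p.1 ∧ p ≠ q))}

/-- Descent set of a word (1-indexed): `{i : wᵢ > wᵢ₊₁}`. -/
def Dword (w : List ℕ) : Set ℕ :=
  {i | 1 ≤ i ∧ i + 1 ≤ w.length ∧ w.getD i 0 < w.getD (i - 1) 0}

/-- Boxes (with multiplicity) containing the primed letter `v'`, top to bottom. -/
def occP (T : SVTRep) (v : ℕ) : List ((ℕ × ℕ) × ℕ) :=
  (List.range T.length).flatMap (fun i =>
    (List.range (T.getD i []).length).filterMap (fun k =>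
      let m := (boxAt T i k).count (v, true)
      if m = 0 then none else some ((i, k), m)))

/-- Boxes (with multiplicity) containing the unprimed letter `v`, left to right. -/
def occU (T : SVTRep) (v : ℕ) : List ((ℕ × ℕ) × ℕ) :=
  ((List.range T.length).flatMap (fun i =>
    (List.range (T.getD i []).length).filterMap (fun k =>
      let m := (boxAt T i k).count (v, false)
      if m = 0 then none else some ((i, k), m)))).mergeSort
    (fun p q => p.1.1 + p.1.2 ≤ q.1.1 + q.1.2)

/-- All occurrences of entries of `T` in the order `1' < 1 < 2' < 2 < ⋯`,
occurrences of `v` read left to right and of `v'` top to bottom. -/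
def allOcc (T : SVTRep) : List ((ℕ × ℕ) × ℕ × Bool) :=
  (List.range (((totalMS T).map Prod.fst).sum)).flatMap (fun v0 =>
    (occP T (v0 + 1)).map (fun o => (o.1, o.2, true)) ++
    (occU T (v0 + 1)).map (fun o => (o.1, o.2, false)))

def addLabels (S : SVTRep) (p : ℕ × ℕ) (start m : ℕ) (pr : Bool) : SVTRep :=
  S.set p.1 ((S.getD p.1 []).set p.2
    ((((List.range m).map (fun t => (start + t + 1, pr)) : List (ℕ × Bool)) : Multiset _) +
      (S.getD p.1 []).getD p.2 0))

/-- Standardization of a weak set-valued shifted tableau. -/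
def stdize (T : SVTRep) : SVTRep :=
  ((allOcc T).foldl
    (fun Sn o => (addLabels Sn.1 o.1 Sn.2 o.2.1 o.2.2, Sn.2 + o.2.1))
    (T.map (fun r => r.map (fun _ => (0 : Multiset (ℕ × Bool)))), 0)).1
/-! ### Weak K-Knuth equivalence -/

/-- A single weak K-Knuth relation (Buch–Samuel), for positive letters
`a < b < c`. -/
inductive KStep : List ℕ → List ℕ → Prop
  | dup (u v : List ℕ) (a : ℕ) (ha : 0 < a) :
      KStep (u ++ [a, a] ++ v) (u ++ [a] ++ v)
  | aba (u v : List ℕ) (a b : ℕ) (ha : 0 < a) (hab : a < b) :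
      KStep (u ++ [a, b, a] ++ v) (u ++ [b, a, b] ++ v)
  | bac (u v : List ℕ) (a b c : ℕ) (ha : 0 < a) (hab : a < b) (hbc : b < c) :
      KStep (u ++ [b, a, c] ++ v) (u ++ [b, c, a] ++ v)
  | acb (u v : List ℕ) (a b c : ℕ) (ha : 0 < a) (hab : a < b) (hbc : b < c) :
      KStep (u ++ [a, c, b] ++ v) (u ++ [c, a, b] ++ v)
  | front (u : List ℕ) (a b : ℕ) (ha : 0 < a) (hab : a < b) :
      KStep ([a, b] ++ u) ([b, a] ++ u)

/-- Weak K-Knuth equivalence: symmetric transitive (and reflexive) closure of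
the weak K-Knuth relations. -/
def WeakKKnuth : List ℕ → List ℕ → Prop := Relation.EqvGen KStep

/-- Restriction of a word to the letters lying in the interval `[lo, hi]`. -/
def restrictWord (lo hi : ℕ) (w : List ℕ) : List ℕ :=
  w.filter (fun x => decide (lo ≤ x ∧ x ≤ hi))

/-- A word of positive integers. -/
def PosWord (w : List ℕ) : Prop := ∀ x ∈ w, 0 < x

/-- The reading word of a tableau: rows left to right, bottom to top. -/
def rowword (T : Tableau) : List ℕ := T.reverse.flatten

/-- Unique rectification target: the only increasing shifted tableau in its
weak K-Knuth equivalence class. -/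
def IsURT (T : Tableau) : Prop :=
  IsIncreasing T ∧
  ∀ T' : Tableau, IsIncreasing T' → WeakKKnuth (rowword T') (rowword T) → T' = T

/-- The minimal increasing shifted tableau of shape `λ`. -/
def Mtab (lam : List ℕ) : Tableau :=
  (List.range lam.length).map (fun i =>
    (List.range (lam.getD i 0)).map (fun p => 2 * i + p + 1))

/-! ### Symmetric-function layer -/

/-- Number of entries of `T` equal to `v` or `v'`. -/
def wtOf (T : SVTRep) (v : ℕ) : ℕ := ((totalMS T).filter (fun e => e.1 = v)).card

/-- The weak shifted stable Grothendieck polynomial `K_λ`: the generating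
function of weak set-valued shifted tableaux of shape `λ`. -/
noncomputable def Kser (lam : List ℕ) : MvPowerSeries ℕ ℚ :=
  fun μ => (Set.ncard {T : SVTRep | IsWSVT T ∧ sshape T = lam ∧ ∀ v, μ v = wtOf T v} : ℚ)

/-- The shifted stable Grothendieck polynomial `GP_λ` of Ikeda–Naruse:
`GP_λ = Σ_T (-1)^{|T| - |λ|} x^T` over set-valued shifted tableaux of shape `λ`. -/
noncomputable def GPser (lam : List ℕ) : MvPowerSeries ℕ ℚ :=
  fun μ => ((-1 : ℚ)) ^ (μ.sum (fun _ e => e) - lam.sum) *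
    (Set.ncard {T : SVTRep | IsSVT T ∧ sshape T = lam ∧ ∀ v, μ v = wtOf T v} : ℚ)

/-- Substitution `xᵢ ↦ -xᵢ/(1 - xᵢ)` in a multivariate power series, computed
coefficientwise: `[x^b] f(-x/(1-x)) = Σ_{a ≤ b} ([x^a] f) ∏ᵢ (-1)^{aᵢ} C(bᵢ-1, aᵢ-1)`,
using that `(-x/(1-x))^a = Σ_{b ≥ a} (-1)^a C(b-1, a-1) x^b`. -/
noncomputable def substFrac (f : MvPowerSeries ℕ ℚ) : MvPowerSeries ℕ ℚ :=
  fun b => ∑ a ∈ Finset.Iic b, (MvPowerSeries.coeff a f) *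
    ∏ i ∈ b.support,
      (if a i = 0 then 0 else
        ((-1 : ℚ)) ^ (a i) * (Nat.choose (b i - 1) (a i - 1) : ℚ))

/-- A power series in variables `x₀, x₁, …` is symmetric if it is invariant
under every permutation of the variables. -/
def IsSymmPS (f : MvPowerSeries ℕ ℚ) : Prop :=
  ∀ (σ : Equiv.Perm ℕ) (μ : ℕ →₀ ℕ),
    MvPowerSeries.coeff (Finsupp.equivMapDomain σ μ) f = MvPowerSeries.coeff μ f

/-- The fundamental quasisymmetric function `f_D` for words of length `m`
(descent positions `D`, 1-indexed): `Σ x_{i₁} ⋯ x_{iₘ}` over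
`i₁ ≤ ⋯ ≤ iₘ` with `i_j < i_{j+1}` whenever `j ∈ D`. -/
noncomputable def fQ (m : ℕ) (D : Set ℕ) : MvPowerSeries ℕ ℚ :=
  fun μ => (Set.ncard {s : ℕ → ℕ |
    (∀ i, 1 ≤ i → i ≤ m → 1 ≤ s i) ∧
    (∀ i, i = 0 ∨ m < i → s i = 0) ∧
    (∀ i, 1 ≤ i → i + 1 ≤ m → s i ≤ s (i + 1)) ∧
    (∀ i ∈ D, 1 ≤ i → i + 1 ≤ m → s i < s (i + 1)) ∧
    (∀ v, μ v = Set.ncard {i | 1 ≤ i ∧ i ≤ m ∧ s i = v})} : ℚ)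

/-- `IsShuffle u v w` : `w` is a shuffle (interleaving) of `u` and `v`. -/
inductive IsShuffle : List ℕ → List ℕ → List ℕ → Prop
  | nil : IsShuffle [] [] []
  | left {u v w : List ℕ} (a : ℕ) : IsShuffle u v w → IsShuffle (a :: u) v (a :: w)
  | right {u v w : List ℕ} (a : ℕ) : IsShuffle u v w → IsShuffle u (a :: v) (a :: w)

/-! ### Skew shifted tableaux -/

/-- Entry of a skew filling `R` of shape `ν/λ` in row `i`, absolute column `j`. -/
def skentry? (lam : List ℕ) (R : List (List ℕ)) (i j : ℕ) : Option ℕ :=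
  if i + lam.getD i 0 ≤ j then (R.getD i [])[j - i - lam.getD i 0]? else none

/-- Increasing shifted skew tableau of shape `ν/λ`. -/
def IsIncSkew (lam nu : List ℕ) (R : List (List ℕ)) : Prop :=
  lam.length ≤ nu.length ∧ (∀ i, lam.getD i 0 ≤ nu.getD i 0) ∧
  R.length = nu.length ∧
  (∀ i, (R.getD i []).length = nu.getD i 0 - lam.getD i 0) ∧
  (∀ r ∈ R, List.Chain' (· < ·) r) ∧
  (∀ r ∈ R, ∀ x ∈ r, 0 < x) ∧
  (∀ i j a b, skentry? lam R i j = some a → skentry? lam R (i + 1) j = some b → a < b)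

/-! ### Unshifted Hecke insertion and stable Grothendieck polynomials -/

/-- Hecke insertion (Buch–Kresch–Shimozono–Tamvakis–Yong) of a letter into the
rows of an (unshifted) increasing tableau; `prev` is the previous row. -/
def hIns : Option (List ℕ) → List (List ℕ) → ℕ → List (List ℕ)
  | prev, [], x =>
      match prev with
      | none => [[x]]
      | some P => if P.getD 0 0 < x then [[x]] else []
  | prev, R :: rest, x =>
    match R.findIdx? (fun a => decide (x < a)) with
    | none =>
      let ok : Bool := ((R.isEmpty : Bool) || decide (R.getLastD 0 < x)) &&
        (prev.elim true (fun P => decide (R.length < P.length) && decide (P.getD R.length 0 < x)))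
      if ok then (R ++ [x]) :: rest else R :: rest
    | some k =>
      let y := R.getD k 0
      let ok : Bool := ((k == 0) || decide (R.getD (k - 1) 0 < x)) &&
        (prev.elim true (fun P => decide (P.getD k 0 < x)))
      let R' := if ok then R.set k x else R
      R' :: hIns (some R') rest y

/-- The (unshifted) Hecke insertion tableau `P_K(w)` of a word. -/
def PK (w : List ℕ) : List (List ℕ) := w.foldl (fun T x => hIns none T x) []

/-- Unshifted set-valued tableaux: boxes filled by finite nonempty sets. -/
abbrev USVRep := List (List (Multiset ℕ))

def uboxAt (T : USVRep) (i k : ℕ) : Multiset ℕ := (T.getD i []).getD k 0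

/-- Set-valued tableau of (unshifted) partition shape: rows weakly increase,
columns weakly increase between boxes, and each integer appears in at most one
box of each column. -/
def IsUSV (T : USVRep) : Prop :=
  (∀ r ∈ T, r ≠ []) ∧
  List.Chain' (fun r s => s.length ≤ r.length) T ∧
  (∀ r ∈ T, ∀ b ∈ r, b ≠ 0 ∧ b.Nodup) ∧
  (∀ r ∈ T, ∀ b ∈ r, ∀ x ∈ b, 0 < x) ∧
  (∀ i k, ∀ x ∈ uboxAt T i k, ∀ y ∈ uboxAt T i (k + 1), x ≤ y) ∧
  (∀ i k, ∀ x ∈ uboxAt T i k, ∀ y ∈ uboxAt T (i + 1) k, x ≤ y) ∧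
  (∀ v k : ℕ, {i | v ∈ uboxAt T i k}.Subsingleton)

def uwt (T : USVRep) (v : ℕ) : ℕ :=
  (((T.map (fun r => r.sum)).sum : Multiset ℕ).filter (fun x => x = v)).card

/-- The (signless) stable Grothendieck polynomial `G_μ`: generating function
of set-valued tableaux of shape `μ`. -/
noncomputable def Gser (mu : List ℕ) : MvPowerSeries ℕ ℚ :=
  fun μ => (Set.ncard {T : USVRep | IsUSV T ∧ T.map List.length = mu ∧ ∀ v, μ v = uwt T v} : ℚ)
namespace S13
abbrev Occ := (ℕ × ℕ) × ℕ × Bool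

def run (n m : ℕ) (pr : Bool) : Multiset (ℕ × Bool) :=
  (((List.range m).map (fun t => (n + t + 1, pr)) : List (ℕ × Bool)) : Multiset (ℕ × Bool))

def msum (L : List Occ) : ℕ := (L.map (fun o => o.2.1)).sum

def sim : List Occ → ℕ → (ℕ × ℕ) → Multiset (ℕ × Bool)
  | [], _, _ => 0
  | o :: L, n, p => (if o.1 = p then run n o.2.1 o.2.2 else 0) + sim L (n + o.2.1) p

def arun : List Occ → ℕ → Multiset (ℕ × Bool)
  | [], _ => 0
  | o :: L, n => run n o.2.1 o.2.2 + arun L (n + o.2.1)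

lemma mem_run {n m : ℕ} {pr : Bool} {e : ℕ × Bool} (h : e ∈ run n m pr) :
    n < e.1 ∧ e.1 ≤ n + m ∧ e.2 = pr := by
  simp only [run, Multiset.mem_coe, List.mem_map, List.mem_range] at h
  obtain ⟨t, ht, rfl⟩ := h
  exact ⟨by omega, by omega, rfl⟩

lemma run_mem (n m : ℕ) (pr : Bool) {v : ℕ} (h1 : n < v) (h2 : v ≤ n + m) :
    (v, pr) ∈ run n m pr := by
  simp only [run, Multiset.mem_coe, List.mem_map, List.mem_range]
  exact ⟨v - n - 1, by omega, by simp; omega⟩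

lemma run_nodup (n m : ℕ) (pr : Bool) : (run n m pr).Nodup := by
  refine Multiset.coe_nodup.2 (List.Nodup.map ?_ (List.nodup_range (n := m)))
  intro a b h; simpa using h

lemma mem_sim_bound {L : List Occ} {n : ℕ} {p : ℕ × ℕ} {e : ℕ × Bool}
    (h : e ∈ sim L n p) : n < e.1 ∧ e.1 ≤ n + msum L := by
  induction L generalizing n with
  | nil => simp [sim] at h
  | cons o L ih =>
    rw [sim, Multiset.mem_add] at h
    rcases h with h | h
    · split at h
      · obtain ⟨h1, h2, _⟩ := mem_run h
        simp [msum]; omega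
      · simp at h
    · obtain ⟨h1, h2⟩ := ih h
      simp [msum] at h2 ⊢; omega

lemma mem_arun_bound {L : List Occ} {n : ℕ} {e : ℕ × Bool}
    (h : e ∈ arun L n) : n < e.1 ∧ e.1 ≤ n + msum L := by
  induction L generalizing n with
  | nil => simp [arun] at h
  | cons o L ih =>
    rw [arun, Multiset.mem_add] at h
    rcases h with h | h
    · obtain ⟨h1, h2, _⟩ := mem_run h
      simp [msum]; omega
    · obtain ⟨h1, h2⟩ := ih h
      simp [msum] at h2 ⊢; omega

lemma sim_le_arun (L : List Occ) (n : ℕ) (p : ℕ × ℕ) : sim L n p ≤ arun L n := by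
  induction L generalizing n with
  | nil => simp [sim, arun]
  | cons o L ih =>
    rw [sim, arun]
    refine add_le_add ?_ (ih _)
    split <;> simp

lemma sim_nodup (L : List Occ) (n : ℕ) (p : ℕ × ℕ) : (sim L n p).Nodup := by
  induction L generalizing n with
  | nil => simp [sim]
  | cons o L ih =>
    rw [sim]
    refine Multiset.Nodup.add_iff ?_ (ih _) |>.2 (Multiset.disjoint_left.mpr ?_)
    · split
      · exact run_nodup _ _ _
      · simp
    · intro e he he'
      have h2 := (mem_sim_bound he').1
      split at he
      · have := (mem_run he).2.1; omega
      · simp at he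

lemma sim_mem_unique {L : List Occ} {n : ℕ} {p q : ℕ × ℕ} {e : ℕ × Bool}
    (hp : e ∈ sim L n p) (hq : e ∈ sim L n q) : p = q := by
  induction L generalizing n with
  | nil => simp [sim] at hp
  | cons o L ih =>
    rw [sim, Multiset.mem_add] at hp hq
    by_cases hv : e.1 ≤ n + o.2.1
    · have hp' : o.1 = p := by
        rcases hp with h | h
        · by_contra hne; simp [hne] at h
        · have := (mem_sim_bound h).1; omega
      have hq' : o.1 = q := by
        rcases hq with h | h
        · by_contra hne; simp [hne] at h
        · have := (mem_sim_bound h).1; omega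
      rw [← hp', hq']
    · have hp' : e ∈ sim L (n + o.2.1) p := by
        rcases hp with h | h
        · split at h
          · have := (mem_run h).2.1; omega
          · simp at h
        · exact h
      have hq' : e ∈ sim L (n + o.2.1) q := by
        rcases hq with h | h
        · split at h
          · have := (mem_run h).2.1; omega
          · simp at h
        · exact h
      exact ih hp' hq'

lemma sim_eq_zero {L : List Occ} {p : ℕ × ℕ} (h : ∀ o ∈ L, o.1 ≠ p) (n : ℕ) :
    sim L n p = 0 := by
  induction L generalizing n with
  | nil => rfl
  | cons o L ih =>
    rw [sim, ih (fun o ho => h o (List.mem_cons_of_mem _ ho))]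
    have := h o (List.mem_cons_self)
    simp [this]

lemma sim_ne_zero {L : List Occ} {o : Occ} (ho : o ∈ L) (hm : o.2.1 ≠ 0) (n : ℕ) :
    sim L n o.1 ≠ 0 := by
  induction L generalizing n with
  | nil => simp at ho
  | cons a L ih =>
    rw [sim]
    rcases List.mem_cons.1 ho with rfl | ho
    · simp only [if_pos rfl]
      intro h
      have h := add_eq_zero.1 h
      have : (n + 1, o.2.2) ∈ run n o.2.1 o.2.2 := run_mem _ _ _ (by omega) (by omega)
      have h1 : run n o.2.1 o.2.2 = 0 := by simpa using h.1
      rw [h1] at this; simp at this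
    · intro h
      have h := add_eq_zero.1 h
      exact ih ho _ h.2

lemma mem_of_mem_sim {L : List Occ} {n : ℕ} {p : ℕ × ℕ} {e : ℕ × Bool}
    (h : e ∈ sim L n p) : ∃ o ∈ L, o.1 = p := by
  induction L generalizing n with
  | nil => simp [sim] at h
  | cons o L ih =>
    rw [sim, Multiset.mem_add] at h
    rcases h with h | h
    · split at h
      · exact ⟨o, List.mem_cons_self, by assumption⟩
      · simp at h
    · obtain ⟨o', h1, h2⟩ := ih h
      exact ⟨o', List.mem_cons_of_mem _ h1, h2⟩

lemma sim_prime {L : List Occ} {p : ℕ × ℕ} (h : ∀ o ∈ L, o.1 = p → o.2.2 = false)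
    (n : ℕ) : ∀ e ∈ sim L n p, e.2 = false := by
  induction L generalizing n with
  | nil => simp [sim]
  | cons o L ih =>
    intro e he
    rw [sim, Multiset.mem_add] at he
    rcases he with he | he
    · split at he
      · rw [(mem_run he).2.2]
        exact h o (List.mem_cons_self) (by assumption)
      · simp at he
    · exact ih (fun o ho => h o (List.mem_cons_of_mem _ ho)) _ e he

lemma sim_append (L1 L2 : List Occ) (n : ℕ) (p : ℕ × ℕ) :
    sim (L1 ++ L2) n p = sim L1 n p + sim L2 (n + msum L1) p := by
  induction L1 generalizing n with
  | nil => simp [sim, msum]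
  | cons o L1 ih =>
    simp only [List.cons_append, sim, List.append_eq, ih, msum, List.map_cons, List.sum_cons,
      add_assoc, Nat.add_assoc]



lemma getD_set {α : Type*} (l : List α) (j i : ℕ) (x d : α) :
    (l.set j x).getD i d = if j = i ∧ j < l.length then x else l.getD i d := by
  rw [List.getD_eq_getElem?_getD, List.getD_eq_getElem?_getD, List.getElem?_set]
  by_cases h1 : j = i
  · subst h1
    by_cases h2 : j < l.length
    · simp [h2]
    · simp [h2, List.getElem?_eq_none (le_of_not_gt h2)]
  · simp [h1]

lemma sum_set_add {M : Type*} [AddCommMonoid M] (l : List M) (n : ℕ) (hn : n < l.length)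
    (x : M) : (l.set n (x + l.getD n 0)).sum = x + l.sum := by
  rw [List.sum_set]
  have h1 : l.sum = (List.take n l).sum + (List.drop n l).sum :=
    (List.sum_take_add_sum_drop l n).symm
  rw [List.drop_eq_getElem_cons hn, List.sum_cons] at h1
  rw [h1, List.getD_eq_getElem l 0 hn, if_pos hn]
  abel

lemma addLabels_length (S : SVTRep) (p : ℕ × ℕ) (s m : ℕ) (pr : Bool) :
    (addLabels S p s m pr).length = S.length := List.length_set ..

lemma addLabels_rowlen (S : SVTRep) (p : ℕ × ℕ) (s m : ℕ) (pr : Bool) (i : ℕ) :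
    ((addLabels S p s m pr).getD i []).length = (S.getD i []).length := by
  rw [addLabels, getD_set]
  split
  · rename_i h
    rw [List.length_set, ← h.1]
  · rfl

lemma addLabels_box (S : SVTRep) (p : ℕ × ℕ) (s m : ℕ) (pr : Bool) (i k : ℕ)
    (hval : p.1 < S.length ∧ p.2 < (S.getD p.1 []).length) :
    boxAt (addLabels S p s m pr) i k =
      (if p = (i, k) then run s m pr else 0) + boxAt S i k := by
  rw [boxAt, addLabels, getD_set]
  by_cases h1 : p.1 = i
  · rw [if_pos ⟨h1, hval.1⟩, getD_set]
    by_cases h2 : p.2 = k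
    · rw [if_pos ⟨h2, hval.2⟩, if_pos (by rw [← h1, ← h2]), boxAt, h1, run, h2]
    · rw [if_neg (by tauto), if_neg (by intro h; apply h2; rw [h]; ), boxAt, h1, zero_add]
  · rw [if_neg (by tauto), if_neg (by intro h; apply h1; rw [h]; ), boxAt, zero_add]

lemma addLabels_total (S : SVTRep) (p : ℕ × ℕ) (s m : ℕ) (pr : Bool)
    (hval : p.1 < S.length ∧ p.2 < (S.getD p.1 []).length) :
    totalMS (addLabels S p s m pr) = run s m pr + totalMS S := by
  rw [totalMS, addLabels, List.map_set]
  have hrow : ((S.getD p.1 []).set p.2 (run s m pr + (S.getD p.1 []).getD p.2 0)).sum =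
      run s m pr + (S.getD p.1 []).sum := sum_set_add _ _ hval.2 _
  have hget : (S.map (fun r => r.sum)).getD p.1 0 = (S.getD p.1 []).sum := by
    simp only [List.getD_eq_getElem?_getD, List.getElem?_map]
    cases hx : S[p.1]? <;> simp
  calc ((S.map fun r => r.sum).set p.1
        (((S.getD p.1 []).set p.2 (↑(List.map (fun t => (s + t + 1, pr)) (List.range m)) +
          (S.getD p.1 []).getD p.2 0)).sum)).sum
      = ((S.map fun r => r.sum).set p.1
        (run s m pr + (S.map fun r => r.sum).getD p.1 0)).sum := by rw [hget]; exact congrArg _ (by rw [← hrow]; rfl)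
    _ = run s m pr + totalMS S := sum_set_add _ _ (by simpa using hval.1) _

def step (Sn : SVTRep × ℕ) (o : Occ) : SVTRep × ℕ :=
  (addLabels Sn.1 o.1 Sn.2 o.2.1 o.2.2, Sn.2 + o.2.1)

lemma fold_len (L : List Occ) (S : SVTRep) (n : ℕ) :
    (L.foldl step (S, n)).1.length = S.length := by
  induction L generalizing S n with
  | nil => rfl
  | cons o L ih => rw [List.foldl_cons, step, ih, addLabels_length]

lemma fold_rowlen (L : List Occ) (S : SVTRep) (n : ℕ) (i : ℕ) :
    ((L.foldl step (S, n)).1.getD i []).length = (S.getD i []).length := by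
  induction L generalizing S n with
  | nil => rfl
  | cons o L ih => rw [List.foldl_cons, step, ih, addLabels_rowlen]

def Valid (S : SVTRep) (L : List Occ) : Prop :=
  ∀ o ∈ L, o.1.1 < S.length ∧ o.1.2 < (S.getD o.1.1 []).length

lemma fold_box (L : List Occ) (S : SVTRep) (n : ℕ) (hval : Valid S L) (i k : ℕ) :
    boxAt (L.foldl step (S, n)).1 i k = boxAt S i k + sim L n (i, k) := by
  induction L generalizing S n with
  | nil => simp [sim]
  | cons o L ih =>
    have ho := hval o (List.mem_cons_self)
    have hval' : Valid (addLabels S o.1 n o.2.1 o.2.2) L := by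
      intro o' ho'
      rw [addLabels_length, addLabels_rowlen]
      exact hval o' (List.mem_cons_of_mem _ ho')
    rw [List.foldl_cons, step, ih _ _ hval', addLabels_box _ _ _ _ _ _ _ ho, sim]
    rw [add_comm (if o.1 = (i,k) then run n o.2.1 o.2.2 else 0) (boxAt S i k), add_assoc]

lemma fold_total (L : List Occ) (S : SVTRep) (n : ℕ) (hval : Valid S L) :
    totalMS (L.foldl step (S, n)).1 = totalMS S + arun L n := by
  induction L generalizing S n with
  | nil => simp [arun]
  | cons o L ih =>
    have ho := hval o (List.mem_cons_self)
    have hval' : Valid (addLabels S o.1 n o.2.1 o.2.2) L := by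
      intro o' ho'
      rw [addLabels_length, addLabels_rowlen]
      exact hval o' (List.mem_cons_of_mem _ ho')
    rw [List.foldl_cons, step, ih _ _ hval', addLabels_total _ _ _ _ _ ho, arun]
    rw [add_comm (run n o.2.1 o.2.2), add_assoc]


end S13

namespace S13

def pfree (p : ℕ × ℕ) (L : List Occ) : Prop := ∀ o ∈ L, o.1 ≠ p

def Before (p q : ℕ × ℕ) (L : List Occ) : Prop :=
  ∃ L1 L2, L = L1 ++ L2 ∧ pfree q L1 ∧ pfree p L2

lemma pfree_nil (p : ℕ × ℕ) : pfree p [] := by intro o ho; simp at ho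

lemma before_of_pfree_q {p q : ℕ × ℕ} {L : List Occ} (h : pfree q L) : Before p q L :=
  ⟨L, [], (List.append_nil L).symm, h, pfree_nil p⟩

lemma before_of_pfree_p {p q : ℕ × ℕ} {L : List Occ} (h : pfree p L) : Before p q L :=
  ⟨[], L, rfl, pfree_nil q, h⟩

lemma pfree_append {p : ℕ × ℕ} {L1 L2 : List Occ} (h1 : pfree p L1) (h2 : pfree p L2) :
    pfree p (L1 ++ L2) := by
  intro o ho
  rcases List.mem_append.1 ho with h | h
  exacts [h1 o h, h2 o h]

lemma before_append_left {p q : ℕ × ℕ} {A B : List Occ} (hA : pfree q A) (hB : Before p q B) :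
    Before p q (A ++ B) := by
  obtain ⟨L1, L2, rfl, h1, h2⟩ := hB
  exact ⟨A ++ L1, L2, by rw [List.append_assoc], pfree_append hA h1, h2⟩

lemma before_append_right {p q : ℕ × ℕ} {A B : List Occ} (hA : Before p q A) (hB : pfree p B) :
    Before p q (A ++ B) := by
  obtain ⟨L1, L2, rfl, h1, h2⟩ := hA
  exact ⟨L1, L2 ++ B, by rw [List.append_assoc], h1, pfree_append h2 hB⟩

lemma pfree_flatMap {p : ℕ × ℕ} {g : ℕ → List Occ} {l : List ℕ}
    (h : ∀ j ∈ l, pfree p (g j)) : pfree p (l.flatMap g) := by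
  intro o ho
  obtain ⟨j, hj, hoj⟩ := List.mem_flatMap.1 ho
  exact h j hj o hoj

lemma before_flatMap {p q : ℕ × ℕ} (g : ℕ → List Occ) (M t : ℕ)
    (hq : ∀ j, j < t → pfree q (g j)) (hp : ∀ j, t < j → pfree p (g j))
    (ht : Before p q (g t)) : Before p q ((List.range M).flatMap g) := by
  induction M with
  | zero => exact before_of_pfree_q (pfree_nil q)
  | succ M ih =>
    rw [List.range_succ, List.flatMap_append]
    have hsing : ([M].flatMap g) = g M ++ [] := by simp
    rcases lt_trichotomy M t with h | rfl | h
    · refine before_of_pfree_q (pfree_append (pfree_flatMap ?_) (pfree_flatMap ?_))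
      · intro j hj; exact hq j (lt_trans (List.mem_range.1 hj) h)
      · intro j hj; simp at hj; subst hj; exact hq _ h
    · refine before_append_left (pfree_flatMap ?_) ?_
      · intro j hj; exact hq j (List.mem_range.1 hj)
      · rw [hsing]; exact before_append_right ht (pfree_nil p)
    · refine before_append_right ih ?_
      rw [hsing]
      refine pfree_append ?_ (pfree_nil p)
      exact hp M h

lemma sim_lt_of_before {p q : ℕ × ℕ} {L : List Occ} {n : ℕ} {x y : ℕ × Bool}
    (h : Before p q L) (hx : x ∈ sim L n p) (hy : y ∈ sim L n q) : x.1 < y.1 := by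
  obtain ⟨L1, L2, rfl, h1, h2⟩ := h
  rw [sim_append] at hx hy
  rw [sim_eq_zero h2, add_zero] at hx
  rw [sim_eq_zero h1, zero_add] at hy
  have hx' := (mem_sim_bound hx).2
  have hy' := (mem_sim_bound hy).1
  omega

end S13

namespace S13

def occCore (T : SVTRep) (v : ℕ) (pr : Bool) : List ((ℕ × ℕ) × ℕ) :=
  (List.range T.length).flatMap (fun i =>
    (List.range (T.getD i []).length).filterMap (fun k =>
      let m := (boxAt T i k).count (v, pr)
      if m = 0 then none else some ((i, k), m)))

lemma occP_eq (T : SVTRep) (v : ℕ) : occP T v = occCore T v true := rfl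

lemma occU_eq (T : SVTRep) (v : ℕ) :
    occU T v = (occCore T v false).mergeSort (fun p q => p.1.1 + p.1.2 ≤ q.1.1 + q.1.2) := rfl

lemma mem_block {T : SVTRep} {v : ℕ} {pr : Bool} {j : ℕ} {o : (ℕ × ℕ) × ℕ}
    (h : o ∈ (List.range (T.getD j []).length).filterMap (fun k =>
      let m := (boxAt T j k).count (v, pr)
      if m = 0 then none else some ((j, k), m))) :
    o.1.1 = j ∧ o.1.2 < (T.getD j []).length ∧ (v, pr) ∈ boxAt T j o.1.2 ∧ o.2 ≠ 0 := by
  rw [List.mem_filterMap] at h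
  obtain ⟨k, hk, hf⟩ := h
  rw [List.mem_range] at hk
  by_cases hm : (boxAt T j k).count (v, pr) = 0
  · simp [hm] at hf
  · simp only [hm, if_neg, ite_false] at hf
    obtain rfl := (Option.some_inj.1 hf)
    exact ⟨rfl, hk, Multiset.count_pos.1 (Nat.pos_of_ne_zero hm), hm⟩

lemma mem_occCore {T : SVTRep} {v : ℕ} {pr : Bool} {o : (ℕ × ℕ) × ℕ}
    (h : o ∈ occCore T v pr) :
    o.1.1 < T.length ∧ o.1.2 < (T.getD o.1.1 []).length ∧
      (v, pr) ∈ boxAt T o.1.1 o.1.2 ∧ o.2 ≠ 0 := by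
  rw [occCore, List.mem_flatMap] at h
  obtain ⟨i, hi, h⟩ := h
  obtain ⟨h1, h2, h3, h4⟩ := mem_block h
  rw [List.mem_range] at hi
  rw [← h1] at h2 h3 hi
  exact ⟨hi, h2, h3, h4⟩

lemma occCore_mem {T : SVTRep} {v : ℕ} {pr : Bool} {i k : ℕ}
    (hi : i < T.length) (hk : k < (T.getD i []).length) (h : (v, pr) ∈ boxAt T i k) :
    ((i, k), (boxAt T i k).count (v, pr)) ∈ occCore T v pr := by
  rw [occCore, List.mem_flatMap]
  refine ⟨i, List.mem_range.2 hi, ?_⟩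
  rw [List.mem_filterMap]
  refine ⟨k, List.mem_range.2 hk, ?_⟩
  have hm : (boxAt T i k).count (v, pr) ≠ 0 := by
    simpa [Multiset.count_eq_zero] using h
  simp [hm]

def Pb (T : SVTRep) (v : ℕ) : List Occ := (occP T v).map (fun o => (o.1, o.2, true))
def Ub (T : SVTRep) (v : ℕ) : List Occ := (occU T v).map (fun o => (o.1, o.2, false))

lemma allOcc_eq (T : SVTRep) :
    allOcc T = (List.range (((totalMS T).map Prod.fst).sum)).flatMap
      (fun v0 => Pb T (v0 + 1) ++ Ub T (v0 + 1)) := rfl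

lemma mem_Pb {T : SVTRep} {v : ℕ} {o : Occ} (h : o ∈ Pb T v) :
    o.1.1 < T.length ∧ o.1.2 < (T.getD o.1.1 []).length ∧
      (v, true) ∈ boxAt T o.1.1 o.1.2 ∧ o.2.1 ≠ 0 ∧ o.2.2 = true := by
  obtain ⟨o', ho', rfl⟩ := List.mem_map.1 h
  rw [occP_eq] at ho'
  obtain ⟨h1, h2, h3, h4⟩ := mem_occCore ho'
  exact ⟨h1, h2, h3, h4, rfl⟩

lemma mem_Ub {T : SVTRep} {v : ℕ} {o : Occ} (h : o ∈ Ub T v) :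
    o.1.1 < T.length ∧ o.1.2 < (T.getD o.1.1 []).length ∧
      (v, false) ∈ boxAt T o.1.1 o.1.2 ∧ o.2.1 ≠ 0 ∧ o.2.2 = false := by
  obtain ⟨o', ho', rfl⟩ := List.mem_map.1 h
  rw [occU_eq, List.mem_mergeSort] at ho'
  obtain ⟨h1, h2, h3, h4⟩ := mem_occCore ho'
  exact ⟨h1, h2, h3, h4, rfl⟩

lemma mem_allOcc {T : SVTRep} {o : Occ} (h : o ∈ allOcc T) :
    (o.1.1 < T.length ∧ o.1.2 < (T.getD o.1.1 []).length) ∧ o.2.1 ≠ 0 ∧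
      ∃ v, 0 < v ∧ (v, o.2.2) ∈ boxAt T o.1.1 o.1.2 := by
  rw [allOcc_eq] at h
  obtain ⟨v0, _, h⟩ := List.mem_flatMap.1 h
  rcases List.mem_append.1 h with h | h
  · obtain ⟨h1, h2, h3, h4, h5⟩ := mem_Pb h
    exact ⟨⟨h1, h2⟩, h4, v0 + 1, Nat.succ_pos _, by rw [h5]; exact h3⟩
  · obtain ⟨h1, h2, h3, h4, h5⟩ := mem_Ub h
    exact ⟨⟨h1, h2⟩, h4, v0 + 1, Nat.succ_pos _, by rw [h5]; exact h3⟩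

end S13

namespace S13

lemma occU_sorted (T : SVTRep) (v : ℕ) :
    List.Pairwise (fun o1 o2 : (ℕ × ℕ) × ℕ => o1.1.1 + o1.1.2 ≤ o2.1.1 + o2.1.2) (occU T v) := by
  rw [occU_eq]
  have h := List.pairwise_mergeSort
    (le := fun p q : (ℕ × ℕ) × ℕ => decide (p.1.1 + p.1.2 ≤ q.1.1 + q.1.2))
    (fun a b c hab hbc => by simp only [decide_eq_true_eq] at *; omega)
    (fun a b => by simp only [Bool.or_eq_true, decide_eq_true_eq]; omega)
    (occCore T v false)
  exact h.imp (fun hab => by simpa using hab)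

lemma before_of_pairwise {α : Type*} {R : α → α → Prop} {L : List α} (pos : α → ℕ × ℕ)
    {p q : ℕ × ℕ} (hpq : p ≠ q) (hs : List.Pairwise R L)
    (h : ∀ o1 o2, pos o1 = q → pos o2 = p → ¬ R o1 o2) :
    ∃ L1 L2, L = L1 ++ L2 ∧ (∀ o ∈ L1, pos o ≠ q) ∧ (∀ o ∈ L2, pos o ≠ p) := by
  induction L with
  | nil => exact ⟨[], [], rfl, by simp, by simp⟩
  | cons a L ih =>
    rw [List.pairwise_cons] at hs
    by_cases ha : pos a = q
    · refine ⟨[], a :: L, rfl, by simp, ?_⟩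
      intro o ho
      rcases List.mem_cons.1 ho with rfl | ho
      · exact fun hp => hpq (hp ▸ ha)
      · exact fun hop => h a o ha hop (hs.1 o ho)
    · obtain ⟨L1, L2, heq, h1, h2⟩ := ih hs.2
      refine ⟨a :: L1, L2, by rw [heq]; rfl, ?_, h2⟩
      intro o ho
      rcases List.mem_cons.1 ho with rfl | ho
      exacts [ha, h1 o ho]

lemma before_Ub_of_split {T : SVTRep} {v : ℕ} {p q : ℕ × ℕ}
    (h : ∃ L1 L2, occU T v = L1 ++ L2 ∧ (∀ o ∈ L1, o.1 ≠ q) ∧ (∀ o ∈ L2, o.1 ≠ p)) :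
    Before p q (Ub T v) := by
  obtain ⟨L1, L2, heq, h1, h2⟩ := h
  refine ⟨L1.map (fun o => (o.1, o.2, false)), L2.map (fun o => (o.1, o.2, false)),
    by rw [Ub, heq, List.map_append], ?_, ?_⟩
  · intro o ho
    obtain ⟨o', ho', rfl⟩ := List.mem_map.1 ho
    exact h1 o' ho'
  · intro o ho
    obtain ⟨o', ho', rfl⟩ := List.mem_map.1 ho
    exact h2 o' ho'

/-- Row case: `p`, `q` in the same row, `q` to the right: occurrences of `v`
(unprimed) are sorted by antidiagonal, so all `p`-occurrences precede `q`'s. -/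
lemma before_Ub_diag {T : SVTRep} {v : ℕ} {p q : ℕ × ℕ} (hpq : p ≠ q)
    (hd : p.1 + p.2 < q.1 + q.2) : Before p q (Ub T v) := by
  refine before_Ub_of_split (before_of_pairwise (fun o => o.1) hpq (occU_sorted T v) ?_)
  intro o1 o2 hq hp hR
  rw [hq, hp] at hR
  omega

/-- Column-primed case: `p` in an earlier row than `q`: occurrences of `v'` are
listed row by row. -/
lemma before_Pb_row {T : SVTRep} {v : ℕ} {p q : ℕ × ℕ} (hrow : p.1 < q.1) :
    Before p q (Pb T v) := by
  rw [Pb, occP_eq, occCore, List.map_flatMap]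
  refine before_flatMap _ _ p.1 ?_ ?_ ?_
  · intro j hj o ho
    obtain ⟨o', ho', rfl⟩ := List.mem_map.1 ho
    have h1 := (mem_block ho').1
    intro hc
    rw [hc] at h1
    omega
  · intro j hj o ho
    obtain ⟨o', ho', rfl⟩ := List.mem_map.1 ho
    have h1 := (mem_block ho').1
    intro hc
    rw [hc] at h1
    omega
  · refine before_of_pfree_q ?_
    intro o ho
    obtain ⟨o', ho', rfl⟩ := List.mem_map.1 ho
    have h1 := (mem_block ho').1
    intro hc
    rw [hc] at h1
    omega

end S13

namespace S13

lemma keyOf_mono {x y : ℕ × Bool} (h : x.1 < y.1) : keyOf x ≤ keyOf y := by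
  rw [keyOf, keyOf]
  split <;> split <;> omega

/-- Skeleton: all occurrences at `p` precede all occurrences at `q` in `allOcc T`,
provided keys at `p` are all `≤` keys at `q` and the tying block is resolvable. -/
lemma before_allOcc {T : SVTRep} {p q : ℕ × ℕ} (hpq : p ≠ q)
    (hbox : boxAt T p.1 p.2 ≠ 0)
    (hpos : ∀ e ∈ boxAt T p.1 p.2, 0 < e.1)
    (hle : ∀ x ∈ boxAt T p.1 p.2, ∀ y ∈ boxAt T q.1 q.2, keyOf x ≤ keyOf y)
    (hodd : ∀ v, 0 < v → (v, true) ∈ boxAt T p.1 p.2 → Before p q (Pb T v))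
    (heven : ∀ v, 0 < v → (v, false) ∈ boxAt T p.1 p.2 → Before p q (Ub T v)) :
    Before p q (allOcc T) := by
  classical
  set M := boxAt T p.1 p.2 with hM
  have hne : (M.map keyOf).toFinset.Nonempty := by
    rw [Multiset.toFinset_nonempty]
    simpa using hbox
  set K := (M.map keyOf).toFinset.max' hne with hK
  have hKmem : K ∈ (M.map keyOf).toFinset := Finset.max'_mem _ _
  rw [Multiset.mem_toFinset, Multiset.mem_map] at hKmem
  obtain ⟨estar, hestar, hKey⟩ := hKmem
  have hKmax : ∀ e ∈ M, keyOf e ≤ K := fun e he =>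
    Finset.le_max' _ _ (Multiset.mem_toFinset.2 (Multiset.mem_map_of_mem _ he))
  have hepos := hpos estar hestar
  have hK1 : 1 ≤ K := by
    rw [← hKey, keyOf]; split <;> omega
  set t := (K - 1) / 2 with ht
  have hKt : K = 2 * t + 1 ∨ K = 2 * t + 2 := by omega
  rw [allOcc_eq]
  refine before_flatMap _ _ t ?_ ?_ ?_
  · -- blocks before `t` are `q`-free
    intro j hj o ho hop
    rcases List.mem_append.1 ho with h | h
    · obtain ⟨_, _, h3, _, _⟩ := mem_Pb h
      rw [hop] at h3
      have hl := hle estar hestar _ h3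
      rw [hKey] at hl
      simp only [keyOf, if_pos] at hl
      omega
    · obtain ⟨_, _, h3, _, _⟩ := mem_Ub h
      rw [hop] at h3
      have hl := hle estar hestar _ h3
      rw [hKey] at hl
      simp only [keyOf] at hl
      norm_num at hl
      omega
  · -- blocks after `t` are `p`-free
    intro j hj o ho hop
    rcases List.mem_append.1 ho with h | h
    · obtain ⟨_, _, h3, _, _⟩ := mem_Pb h
      rw [hop] at h3
      have hl := hKmax _ h3
      simp only [keyOf, if_pos] at hl
      omega
    · obtain ⟨_, _, h3, _, _⟩ := mem_Ub h
      rw [hop] at h3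
      have hl := hKmax _ h3
      simp only [keyOf] at hl
      norm_num at hl
      omega
  · -- the pivotal block
    rcases hKt with hKodd | hKeven
    · -- maximal key at `p` is primed
      have hes : estar = (t + 1, true) := by
        rcases estar with ⟨a, b⟩
        cases b
        · exfalso
          simp only [keyOf] at hKey
          norm_num at hKey
          omega
        · simp only [keyOf, if_pos] at hKey
          simp only [Prod.mk.injEq, and_true]
          simp at hepos ⊢
          omega
      refine before_append_right (hodd (t + 1) (by omega) (hes ▸ hestar)) ?_
      intro o ho hop
      obtain ⟨_, _, h3, _, _⟩ := mem_Ub ho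
      rw [hop] at h3
      have hl := hKmax _ h3
      simp only [keyOf] at hl
      norm_num at hl
      omega
    · -- maximal key at `p` is unprimed
      have hes : estar = (t + 1, false) := by
        rcases estar with ⟨a, b⟩
        cases b
        · simp only [keyOf] at hKey
          norm_num at hKey
          simp only [Prod.mk.injEq, and_true]
          simp at hepos ⊢
          omega
        · exfalso
          simp only [keyOf, if_pos] at hKey
          simp at hepos
          omega
      refine before_append_left ?_ (heven (t + 1) (by omega) (hes ▸ hestar))
      intro o ho hop
      obtain ⟨_, _, h3, _, _⟩ := mem_Pb ho
      rw [hop] at h3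
      have hl := hle estar hestar _ h3
      rw [hKey] at hl
      simp only [keyOf, if_pos] at hl
      omega

end S13

namespace S13

def psum (L : List ((ℕ × ℕ) × ℕ)) : ℕ := (L.map (fun o => o.2)).sum

lemma msum_map_pr (L : List ((ℕ × ℕ) × ℕ)) (pr : Bool) :
    msum (L.map (fun o => (o.1, o.2, pr))) = psum L := by
  simp only [msum, psum, List.map_map]
  rfl

lemma msum_append (A B : List Occ) : msum (A ++ B) = msum A + msum B := by
  simp [msum]

lemma msum_flatMap (g : ℕ → List Occ) (l : List ℕ) :
    msum (l.flatMap g) = (l.map (fun j => msum (g j))).sum := by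
  induction l with
  | nil => rfl
  | cons a l ih => simp [List.flatMap_cons, msum_append, ih]

lemma psum_perm {A B : List ((ℕ × ℕ) × ℕ)} (h : A.Perm B) : psum A = psum B :=
  List.Perm.sum_eq (h.map _)

lemma psum_append (A B : List ((ℕ × ℕ) × ℕ)) : psum (A ++ B) = psum A + psum B := by
  simp [psum]

lemma psum_flatMap (g : ℕ → List ((ℕ × ℕ) × ℕ)) (l : List ℕ) :
    psum (l.flatMap g) = (l.map (fun j => psum (g j))).sum := by
  induction l with
  | nil => rfl
  | cons a l ih => simp [List.flatMap_cons, psum_append, ih]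

lemma psum_filterMap (g : ℕ → ℕ) (i : ℕ) (l : List ℕ) :
    psum (l.filterMap (fun k => if g k = 0 then none else some ((i, k), g k))) =
      (l.map g).sum := by
  induction l with
  | nil => rfl
  | cons a l ih =>
    rw [List.filterMap_cons, List.map_cons, List.sum_cons]
    by_cases h : g a = 0
    · simp [h, ih]
    · simp only [h, ite_false]
      rw [psum, List.map_cons, List.sum_cons, ← psum, ih]

lemma map_range_getD {α β : Type*} (l : List α) (d : α) (f : α → β) :
    (List.range l.length).map (fun k => f (l.getD k d)) = l.map f := by
  induction l with
  | nil => rfl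
  | cons x xs ih =>
    rw [List.length_cons, List.range_succ_eq_map, List.map_cons, List.map_map, List.map_cons]
    congr 1


lemma count_list_sum {α : Type*} [DecidableEq α] (a : α) (l : List (Multiset α)) :
    l.sum.count a = (l.map (fun b => b.count a)).sum := by
  induction l with
  | nil => rfl
  | cons b l ih => simp [Multiset.count_add, ih]

lemma psum_occCore (T : SVTRep) (v : ℕ) (pr : Bool) :
    psum (occCore T v pr) = (totalMS T).count (v, pr) := by
  rw [occCore, psum_flatMap]
  have h1 : ∀ i ∈ List.range T.length,
      psum ((List.range (T.getD i []).length).filterMap (fun k =>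
        let m := (boxAt T i k).count (v, pr)
        if m = 0 then none else some ((i, k), m))) =
      ((T.getD i []).map (fun b => b.count (v, pr))).sum := by
    intro i _
    have := psum_filterMap (fun k => (boxAt T i k).count (v, pr)) i
      (List.range (T.getD i []).length)
    rw [show (List.range (T.getD i []).length).filterMap (fun k =>
        let m := (boxAt T i k).count (v, pr)
        if m = 0 then none else some ((i, k), m)) =
      (List.range (T.getD i []).length).filterMap (fun k =>
        if (boxAt T i k).count (v, pr) = 0 then none
        else some ((i, k), (boxAt T i k).count (v, pr))) from rfl, this]
    exact congrArg _ (map_range_getD (T.getD i []) 0 (fun b => b.count (v, pr)))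
  rw [List.map_congr_left h1]
  rw [show (fun i => ((T.getD i []).map (fun b => b.count (v, pr))).sum) =
    (fun r => (r.map (fun b => b.count (v, pr))).sum) ∘ (fun i => T.getD i []) from rfl]
  rw [show (List.range T.length).map
      ((fun r => (r.map (fun b => b.count (v, pr))).sum) ∘ (fun i => T.getD i [])) =
    (List.range T.length).map
      (fun i => (fun r : List (Multiset (ℕ × Bool)) => (r.map (fun b => b.count (v, pr))).sum)
        (T.getD i [])) from rfl]
  rw [map_range_getD T [] (fun r => (r.map (fun b => b.count (v, pr))).sum)]
  rw [totalMS, count_list_sum, List.map_map]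
  apply congrArg
  apply List.map_congr_left
  intro r _
  exact (count_list_sum _ r).symm

lemma sum_indicator_zero {N ev : ℕ} (h : ev = 0 ∨ N < ev) :
    ((List.range N).map (fun v0 => if v0 + 1 = ev then 1 else 0)).sum = 0 := by
  apply List.sum_eq_zero
  intro x hx
  obtain ⟨v0, hv0, rfl⟩ := List.mem_map.1 hx
  rw [List.mem_range] at hv0
  rw [if_neg (by omega)]

lemma sum_indicator_one {N ev : ℕ} (h1 : 1 ≤ ev) (h2 : ev ≤ N) :
    ((List.range N).map (fun v0 => if v0 + 1 = ev then 1 else 0)).sum = 1 := by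
  induction N with
  | zero => omega
  | succ N ih =>
    rw [List.range_succ, List.map_append, List.sum_append]
    by_cases h : ev = N + 1
    · rw [sum_indicator_zero (by omega)]
      simp [h]
    · rw [ih (by omega)]
      simp [h]
      omega

lemma sum_counts (N : ℕ) (M : Multiset (ℕ × Bool)) (h : ∀ e ∈ M, 1 ≤ e.1 ∧ e.1 ≤ N) :
    ((List.range N).map (fun v0 => M.count (v0 + 1, true) + M.count (v0 + 1, false))).sum =
      Multiset.card M := by
  induction M using Multiset.induction with
  | empty => simp
  | cons e M ih =>
    have he := h e (Multiset.mem_cons_self _ _)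
    have h' : ∀ x ∈ M, 1 ≤ x.1 ∧ x.1 ≤ N := fun x hx => h x (Multiset.mem_cons_of_mem hx)
    simp only [Multiset.count_cons, Multiset.card_cons]
    have hsplit : ((List.range N).map (fun v0 =>
        (M.count (v0 + 1, true) + if (v0 + 1, true) = e then 1 else 0) +
        (M.count (v0 + 1, false) + if (v0 + 1, false) = e then 1 else 0))).sum =
      ((List.range N).map (fun v0 => M.count (v0 + 1, true) + M.count (v0 + 1, false))).sum +
      ((List.range N).map (fun v0 =>
        (if (v0 + 1, true) = e then 1 else 0) + (if (v0 + 1, false) = e then 1 else 0))).sum := by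
      rw [← List.sum_map_add]
      apply congrArg
      apply List.map_congr_left
      intro a _
      omega
    rw [hsplit, ih h']
    have hone : ((List.range N).map (fun v0 =>
        (if (v0 + 1, true) = e then 1 else 0) + (if (v0 + 1, false) = e then 1 else 0))).sum = 1 := by
      rcases e with ⟨ev, eb⟩
      cases eb
      · have : ∀ v0 ∈ List.range N, ((if (v0 + 1, true) = ((ev : ℕ), false) then 1 else 0) +
            (if (v0 + 1, false) = ((ev : ℕ), false) then 1 else 0) : ℕ) =
            (if v0 + 1 = ev then 1 else 0) := by
          intro v0 _
          simp [Prod.ext_iff]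
        rw [List.map_congr_left this]
        exact sum_indicator_one he.1 he.2
      · have : ∀ v0 ∈ List.range N, ((if (v0 + 1, true) = ((ev : ℕ), true) then 1 else 0) +
            (if (v0 + 1, false) = ((ev : ℕ), true) then 1 else 0) : ℕ) =
            (if v0 + 1 = ev then 1 else 0) := by
          intro v0 _
          simp [Prod.ext_iff]
        rw [List.map_congr_left this]
        exact sum_indicator_one he.1 he.2
    omega

lemma msum_allOcc (T : SVTRep) (hpos : ∀ e ∈ totalMS T, 0 < e.1) :
    msum (allOcc T) = Multiset.card (totalMS T) := by
  rw [allOcc_eq, msum_flatMap]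
  have h1 : ∀ v0 ∈ List.range (((totalMS T).map Prod.fst).sum),
      msum (Pb T (v0 + 1) ++ Ub T (v0 + 1)) =
      (totalMS T).count (v0 + 1, true) + (totalMS T).count (v0 + 1, false) := by
    intro v0 _
    have hperm : (occU T (v0 + 1)).Perm (occCore T (v0 + 1) false) :=
      List.mergeSort_perm _ _
    rw [msum_append, Pb, Ub, msum_map_pr, msum_map_pr, occP_eq, psum_occCore,
      psum_perm hperm, psum_occCore]
  rw [List.map_congr_left h1]
  apply sum_counts
  intro e he
  refine ⟨hpos e he, ?_⟩
  exact Multiset.single_le_sum (fun x _ => Nat.zero_le x) e.1 (Multiset.mem_map_of_mem _ he)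

lemma arun_map_fst (L : List Occ) (n : ℕ) :
    (arun L n).map Prod.fst = (((List.range (msum L)).map (fun t => n + t + 1) : List ℕ) :
      Multiset ℕ) := by
  induction L generalizing n with
  | nil => simp [arun, msum]
  | cons o L ih =>
    have hr : (run n o.2.1 o.2.2).map Prod.fst =
        (((List.range o.2.1).map (fun t => n + t + 1) : List ℕ) : Multiset ℕ) := by
      simp only [run, Multiset.map_coe, List.map_map]
      rfl
    rw [arun, Multiset.map_add, ih, hr]
    have h2 : msum (o :: L) = o.2.1 + msum L := by simp [msum]
    rw [h2, List.range_add, List.map_append, ← Multiset.coe_add]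
    congr 2
    rw [List.map_map]
    apply List.map_congr_left
    intro a _
    simp only [Function.comp_apply]
    omega

lemma range_map_succ_eq_Icc (n : ℕ) :
    (((List.range n).map (fun t => t + 1) : List ℕ) : Multiset ℕ) = (Finset.Icc 1 n).val := by
  refine (Multiset.Nodup.ext ?_ (Finset.Icc 1 n).nodup).2 ?_
  · exact Multiset.coe_nodup.2 (List.Nodup.map (fun a b h => by omega) (List.nodup_range (n := n)))
  · intro a
    simp only [Multiset.mem_coe, List.mem_map, List.mem_range, ← Finset.mem_def,
      Finset.mem_Icc]
    constructor
    · rintro ⟨t, ht, rfl⟩; omega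
    · rintro ⟨h1, h2⟩; exact ⟨a - 1, by omega, by omega⟩

end S13

namespace S13

def S0 (T : SVTRep) : SVTRep :=
  T.map (fun r => r.map (fun _ => (0 : Multiset (ℕ × Bool))))

lemma stdize_eq (T : SVTRep) :
    stdize T = ((allOcc T).foldl step (S0 T, 0)).1 := rfl

lemma S0_len (T : SVTRep) : (S0 T).length = T.length := List.length_map ..

lemma S0_rowlen (T : SVTRep) (i : ℕ) :
    ((S0 T).getD i []).length = (T.getD i []).length := by
  rcases lt_or_ge i T.length with h | h
  · rw [S0, List.getD_eq_getElem _ _ (by simpa using h), List.getD_eq_getElem _ _ h]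
    simp
  · rw [S0, List.getD_eq_default _ _ (by simpa using h), List.getD_eq_default _ _ h]

lemma getD_zero {l : List (Multiset (ℕ × Bool))} (h : ∀ x ∈ l, x = 0) (k : ℕ) :
    l.getD k 0 = 0 := by
  rcases lt_or_ge k l.length with hk | hk
  · rw [List.getD_eq_getElem _ _ hk]
    exact h _ (List.getElem_mem hk)
  · rw [List.getD_eq_default _ _ hk]

lemma S0_box (T : SVTRep) (i k : ℕ) : boxAt (S0 T) i k = 0 := by
  rw [boxAt]
  apply getD_zero
  intro x hx
  rcases lt_or_ge i (S0 T).length with h | h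
  · rw [List.getD_eq_getElem _ _ h] at hx
    have hi : i < T.length := by simpa [S0_len] using h
    simp only [S0, List.getElem_map] at hx
    obtain ⟨y, _, rfl⟩ := List.mem_map.1 hx
    rfl
  · rw [List.getD_eq_default _ _ h] at hx
    simp at hx

lemma S0_total (T : SVTRep) : totalMS (S0 T) = 0 := by
  rw [totalMS]
  apply List.sum_eq_zero
  intro x hx
  obtain ⟨r, hr, rfl⟩ := List.mem_map.1 hx
  obtain ⟨r0, _, rfl⟩ := List.mem_map.1 hr
  apply List.sum_eq_zero
  intro y hy
  obtain ⟨_, _, rfl⟩ := List.mem_map.1 hy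
  rfl

lemma valid_allOcc (T : SVTRep) : Valid (S0 T) (allOcc T) := by
  intro o ho
  obtain ⟨⟨h1, h2⟩, _, _⟩ := mem_allOcc ho
  rw [S0_len, S0_rowlen]
  exact ⟨h1, h2⟩

lemma stdize_box (T : SVTRep) (i k : ℕ) :
    boxAt (stdize T) i k = sim (allOcc T) 0 (i, k) := by
  rw [stdize_eq, fold_box _ _ _ (valid_allOcc T), S0_box, zero_add]

lemma stdize_total (T : SVTRep) : totalMS (stdize T) = arun (allOcc T) 0 := by
  rw [stdize_eq, fold_total _ _ _ (valid_allOcc T), S0_total, zero_add]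

lemma stdize_len (T : SVTRep) : (stdize T).length = T.length := by
  rw [stdize_eq, fold_len, S0_len]

lemma stdize_rowlen (T : SVTRep) (i : ℕ) :
    ((stdize T).getD i []).length = (T.getD i []).length := by
  rw [stdize_eq, fold_rowlen, S0_rowlen]

lemma mem_sum_of_mem {α : Type*} {l : List (Multiset α)} {b : Multiset α} (hb : b ∈ l)
    {e : α} (he : e ∈ b) : e ∈ l.sum := by
  induction l with
  | nil => simp at hb
  | cons a l ih =>
    rw [List.sum_cons, Multiset.mem_add]
    rcases List.mem_cons.1 hb with rfl | hb
    · exact Or.inl he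
    · exact Or.inr (ih hb)

lemma mem_totalMS {T : SVTRep} {i k : ℕ} {e : ℕ × Bool} (hi : i < T.length)
    (he : e ∈ boxAt T i k) : e ∈ totalMS T := by
  rw [totalMS]
  have hrow : (T.getD i []).sum ∈ T.map (fun r => r.sum) := by
    rw [List.getD_eq_getElem _ _ hi]
    exact List.mem_map_of_mem (List.getElem_mem hi)
  refine mem_sum_of_mem hrow ?_
  rw [boxAt] at he
  rcases lt_or_ge k (T.getD i []).length with h2 | h2
  · refine mem_sum_of_mem ?_ he
    rw [List.getD_eq_getElem _ _ h2]
    exact List.getElem_mem h2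
  · rw [List.getD_eq_default _ _ h2] at he
    simp at he

lemma box_ne_zero {T : SVTRep} (h3 : ∀ r ∈ T, ∀ b ∈ r, b ≠ 0) {i k : ℕ}
    (hi : i < T.length) (hk : k < (T.getD i []).length) : boxAt T i k ≠ 0 := by
  refine h3 (T.getD i []) ?_ _ ?_
  · rw [List.getD_eq_getElem _ _ hi]
    exact List.getElem_mem hi
  · rw [boxAt, List.getD_eq_getElem _ _ hk]
    exact List.getElem_mem hk

lemma exists_occ (T : SVTRep) (h3 : ∀ r ∈ T, ∀ b ∈ r, b ≠ 0)
    (h4 : ∀ e ∈ totalMS T, 0 < e.1) {i k : ℕ}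
    (hi : i < T.length) (hk : k < (T.getD i []).length) :
    ∃ o ∈ allOcc T, o.1 = (i, k) ∧ o.2.1 ≠ 0 := by
  have hne := box_ne_zero h3 hi hk
  obtain ⟨e, he⟩ := Multiset.exists_mem_of_ne_zero hne
  have hmem : e ∈ totalMS T := mem_totalMS hi he
  have hv1 : 0 < e.1 := h4 e hmem
  have hvN : e.1 ≤ ((totalMS T).map Prod.fst).sum :=
    Multiset.single_le_sum (fun x _ => Nat.zero_le x) e.1 (Multiset.mem_map_of_mem _ hmem)
  rcases e with ⟨v, pr⟩
  have hocc : ((i, k), (boxAt T i k).count (v, pr)) ∈ occCore T v pr := occCore_mem hi hk he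
  have hcount : (boxAt T i k).count (v, pr) ≠ 0 := by
    simpa [Multiset.count_eq_zero] using he
  refine ⟨((i, k), (boxAt T i k).count (v, pr), pr), ?_, rfl, hcount⟩
  rw [allOcc_eq, List.mem_flatMap]
  refine ⟨v - 1, List.mem_range.2 (by simp at hv1 hvN; omega), ?_⟩
  rw [List.mem_append]
  have hv : v - 1 + 1 = v := by simp at hv1; omega
  cases pr
  · right
    rw [Ub, List.mem_map]
    refine ⟨((i, k), (boxAt T i k).count (v, false)), ?_, rfl⟩
    rw [occU_eq, List.mem_mergeSort, hv]
    exact hocc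
  · left
    rw [Pb, List.mem_map]
    refine ⟨((i, k), (boxAt T i k).count (v, true)), ?_, rfl⟩
    rw [occP_eq, hv]
    exact hocc

end S13

namespace S13

lemma before_row (T : SVTRep) (hT : IsWSVT T) {i k : ℕ}
    (hi : i < T.length) (hk : k < (T.getD i []).length)
    (hk1 : k + 1 < (T.getD i []).length) :
    Before (i, k) (i, k + 1) (allOcc T) := by
  obtain ⟨h1, h2, h3, h4, h5, h6, h7, h8, h9⟩ := hT
  refine before_allOcc (by simp) (box_ne_zero h3 hi hk) ?_ ?_ ?_ ?_
  · exact fun e he => h4 e (mem_totalMS hi he)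
  · exact h5 i k
  · intro v hv hvm
    refine before_of_pfree_q ?_
    intro o ho hop
    obtain ⟨_, _, hm, _, _⟩ := mem_Pb ho
    rw [hop] at hm
    have := h9 v i hvm hm
    omega
  · intro v hv hvm
    exact before_Ub_diag (by simp) (by omega)

lemma before_col (T : SVTRep) (hT : IsWSVT T) {i k : ℕ}
    (hi : i < T.length) (hk1 : k + 1 < (T.getD i []).length)
    (hi1 : i + 1 < T.length) (hk : k < (T.getD (i + 1) []).length) :
    Before (i, k + 1) (i + 1, k) (allOcc T) := by
  obtain ⟨h1, h2, h3, h4, h5, h6, h7, h8, h9⟩ := hT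
  refine before_allOcc (by simp) (box_ne_zero h3 hi hk1) ?_ ?_ ?_ ?_
  · exact fun e he => h4 e (mem_totalMS hi he)
  · exact h6 i k
  · intro v hv hvm
    exact before_Pb_row (by omega)
  · intro v hv hvm
    refine before_of_pfree_q ?_
    intro o ho hop
    obtain ⟨_, _, hm, _, _⟩ := mem_Ub ho
    rw [hop] at hm
    have hmem1 : i ∈ {j | j ≤ i + k + 1 ∧ (v, false) ∈ boxAt T j (i + k + 1 - j)} :=
      ⟨by omega, by rw [show i + k + 1 - i = k + 1 from by omega]; exact hvm⟩
    have hmem2 : i + 1 ∈ {j | j ≤ i + k + 1 ∧ (v, false) ∈ boxAt T j (i + k + 1 - j)} :=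
      ⟨by omega, by rw [show i + k + 1 - (i + 1) = k from by omega]; exact hm⟩
    have := h8 v (i + k + 1) hmem1 hmem2
    omega

end S13
/-- the standardization of a weak set-valued shifted tableau is
a standard set-valued shifted tableau (of the same shape, on as many letters
as `T` has entries). -/
theorem stmt13 (T : SVTRep) (hT : IsWSVT T) :
    IsStdSVT (Multiset.card (totalMS T)) (stdize T) ∧
    sshape (stdize T) = sshape T := by
  obtain ⟨h1, h2, h3, h4, h5, h6, h7, h8, h9⟩ := hT
  have hT' : IsWSVT T := ⟨h1, h2, h3, h4, h5, h6, h7, h8, h9⟩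
  have hlen := S13.stdize_len T
  have hrowlen := S13.stdize_rowlen T
  have hshape : sshape (stdize T) = sshape T := by
    rw [sshape, sshape]
    apply List.ext_getElem (by simpa using hlen)
    intro n hn1 hn2
    have hn1' : n < (stdize T).length := by simpa using hn1
    have hn2' : n < T.length := by simpa using hn2
    simp only [List.getElem_map]
    have h := hrowlen n
    rw [List.getD_eq_getElem _ _ hn1', List.getD_eq_getElem _ _ hn2'] at h
    exact h
  have hval : ∀ i k (e : ℕ × Bool), e ∈ boxAt (stdize T) i k →
      i < T.length ∧ k < (T.getD i []).length := by
    intro i k e he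
    rw [S13.stdize_box] at he
    obtain ⟨o, ho, ho1⟩ := S13.mem_of_mem_sim he
    have hv := (S13.mem_allOcc ho).1
    rw [ho1] at hv
    exact hv
  refine ⟨⟨⟨⟨?_, ?_, ?_, ?_, ?_, ?_, ?_, ?_, ?_⟩, ?_⟩, ?_⟩, hshape⟩
  · -- rows nonempty
    intro r hr
    obtain ⟨n, hn, rfl⟩ := List.getElem_of_mem hr
    have hTn : n < T.length := by rw [← hlen]; exact hn
    have hlr : ((stdize T)[n]).length = (T.getD n []).length := by
      rw [← List.getD_eq_getElem (stdize T) [] hn]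
      exact hrowlen n
    have hmem : T.getD n [] ∈ T := by
      rw [List.getD_eq_getElem _ _ hTn]
      exact List.getElem_mem hTn
    have hne := h1 _ hmem
    intro hcon
    apply hne
    apply List.eq_nil_of_length_eq_zero
    rw [← hlr, hcon]
    rfl
  · -- row lengths strictly decrease
    have hc : List.Chain' (fun a b => b < a) (sshape T) := (List.isChain_map _).2 h2
    rw [← hshape] at hc
    exact (List.isChain_map _).1 hc
  · -- boxes nonempty
    intro r hr b hb
    obtain ⟨n, hn, rfl⟩ := List.getElem_of_mem hr
    obtain ⟨m, hm, rfl⟩ := List.getElem_of_mem hb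
    have hbeq : boxAt (stdize T) n m = (stdize T)[n][m] := by
      rw [boxAt, List.getD_eq_getElem _ _ hn, List.getD_eq_getElem _ _ hm]
    rw [← hbeq, S13.stdize_box]
    have hTn : n < T.length := by rw [← hlen]; exact hn
    have hTm : m < (T.getD n []).length := by
      have h := hrowlen n
      rw [List.getD_eq_getElem _ _ hn] at h
      omega
    obtain ⟨o, ho, ho1, ho2⟩ := S13.exists_occ T h3 h4 hTn hTm
    have hne := S13.sim_ne_zero ho ho2 0
    rw [ho1] at hne
    exact hne
  · -- entries positive
    intro e he
    rw [S13.stdize_total] at he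
    have := S13.mem_arun_bound he
    omega
  · -- rows weakly increase
    intro i k x hx y hy
    have hvx := hval _ _ _ hx
    have hvy := hval _ _ _ hy
    rw [S13.stdize_box] at hx hy
    exact S13.keyOf_mono (S13.sim_lt_of_before (S13.before_row T hT' hvx.1 hvx.2 hvy.2) hx hy)
  · -- columns weakly increase
    intro i k x hx y hy
    have hvx := hval _ _ _ hx
    have hvy := hval _ _ _ hy
    rw [S13.stdize_box] at hx hy
    exact S13.keyOf_mono
      (S13.sim_lt_of_before (S13.before_col T hT' hvx.1 hvx.2 hvy.1 hvy.2) hx hy)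
  · -- no primes on the diagonal
    intro i e he
    rw [S13.stdize_box] at he
    refine S13.sim_prime ?_ 0 e he
    intro o ho hop
    obtain ⟨_, _, v, hv, hvm⟩ := S13.mem_allOcc ho
    rw [hop] at hvm
    exact h7 i (v, o.2.2) hvm
  · -- unprimed letters once per column
    intro v c x hx y hy
    obtain ⟨hx1, hx2⟩ := hx
    obtain ⟨hy1, hy2⟩ := hy
    rw [S13.stdize_box] at hx2 hy2
    exact (Prod.ext_iff.1 (S13.sim_mem_unique hx2 hy2)).1
  · -- primed letters once per row
    intro v i x hx y hy
    rw [Set.mem_setOf_eq, S13.stdize_box] at hx hy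
    exact (Prod.ext_iff.1 (S13.sim_mem_unique hx hy)).2
  · -- boxes are sets
    intro r hr b hb
    obtain ⟨n, hn, rfl⟩ := List.getElem_of_mem hr
    obtain ⟨m, hm, rfl⟩ := List.getElem_of_mem hb
    have hbeq : boxAt (stdize T) n m = (stdize T)[n][m] := by
      rw [boxAt, List.getD_eq_getElem _ _ hn, List.getD_eq_getElem _ _ hm]
    rw [← hbeq, S13.stdize_box]
    exact S13.sim_nodup _ _ _
  · -- the letters are exactly 1, …, n
    rw [S13.stdize_total, S13.arun_map_fst, S13.msum_allOcc T h4]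
    rw [show (fun t : ℕ => 0 + t + 1) = (fun t : ℕ => t + 1) from funext fun t => by omega]
    exact S13.range_map_succ_eq_Icc _
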